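/- arXiv:2605.09498 — 3 statements merged into one kernel-verified Lean document; each statement's English description precedes it below -/
import Mathlib

section
/- Suppose that, independently for each q = 1,…,Q and d = 1,…,D₀, the frequency ω_{q,d} is drawn from the Gaussian distribution N(μ_q, σ_q²). Then for all x, x' ∈ ℝ, the expected inner product of the spectral features equals a spectral-mixture kernel in the difference τ = x − x': E[⟨φ_S(x), φ_S(x')⟩] = Σ_{q=1}^{Q} w_q · exp(−σ_q²τ²/2) · cos(μ_q·τ). In particular the expected kernel is stationary (it depends only on x − x'). -/
open Real MeasureTheory ProbabilityTheory Complex NNReal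
open scoped ENNReal

/-- The spectral feature map `φ_S : ℝ → ℝ^{2 Q D₀}`, indexed by `(q, d, i)` with
`i = 0` the cosine coordinate and `i = 1` the sine coordinate of the `(q,d)`-th block:
`√(w_q / D₀) · (cos(ω_{q,d} x − φ_q), sin(ω_{q,d} x − φ_q))`. -/
noncomputable def phiS (Q D0 : ℕ) (w φ : Fin Q → ℝ) (ω : Fin Q → Fin D0 → ℝ) (x : ℝ) :
    Fin Q × Fin D0 × Fin 2 → ℝ :=
  fun qdi =>
    Real.sqrt (w qdi.1 / D0) *
      (if qdi.2.2 = 0 then Real.cos (ω qdi.1 qdi.2.1 * x - φ qdi.1)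
       else Real.sin (ω qdi.1 qdi.2.1 * x - φ qdi.1))

lemma integral_cos_gaussianReal (m : ℝ) (v : ℝ≥0) (t : ℝ) :
    ∫ y, Real.cos (y * t) ∂(gaussianReal m v) =
      Real.exp (-((v : ℝ) * t ^ 2) / 2) * Real.cos (m * t) := by
  by_cases hv : v = 0
  · subst hv
    simp [gaussianReal_zero_var, integral_dirac]
  · have hv0 : (0 : ℝ) < (v : ℝ) := lt_of_le_of_ne (v.coe_nonneg) (by exact_mod_cast (Ne.symm hv))
    set b : ℂ := ((-(1 / (2 * (v : ℝ))) : ℝ) : ℂ) with hb_def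
    have hb : b.re < 0 := by
      simp [hb_def]
      positivity
    set c : ℂ := ((m / (v : ℝ) : ℝ) : ℂ) + Complex.I * t with hc_def
    set d : ℂ := ((-(m ^ 2 / (2 * (v : ℝ))) : ℝ) : ℂ) with hd_def
    -- complex integral
    have hpt : ∀ y : ℝ, Complex.exp (Complex.I * t * y) * (gaussianPDFReal m v y : ℂ)
        = ((Real.sqrt (2 * π * v))⁻¹ : ℝ) * Complex.exp (b * y ^ 2 + c * y + d) := by
      intro y
      rw [gaussianPDFReal]
      push_cast
      rw [mul_comm, mul_assoc, ← Complex.exp_add]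
      congr 1
      congr 1
      rw [hb_def, hc_def, hd_def]
      have : ((v : ℝ) : ℂ) ≠ 0 := by exact_mod_cast hv0.ne'
      push_cast
      field_simp
      ring
    have hexp : d - c ^ 2 / (4 * b) = Complex.I * t * m - (v : ℝ) * t ^ 2 / 2 := by
      have hvc : ((v : ℝ) : ℂ) ≠ 0 := by exact_mod_cast hv0.ne'
      rw [hb_def, hc_def, hd_def]
      push_cast
      field_simp
      ring_nf
      simp [Complex.I_sq]
      ring
    have hint := integral_cexp_quadratic hb c d
    have hsqrt : ((π : ℂ) / (-b)) ^ (1 / 2 : ℂ) = ((Real.sqrt (2 * π * v) : ℝ) : ℂ) := by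
      have h1 : (π : ℂ) / (-b) = ((2 * π * v : ℝ) : ℂ) := by
        rw [hb_def]
        push_cast
        have : ((v : ℝ) : ℂ) ≠ 0 := by exact_mod_cast hv0.ne'
        field_simp
      rw [h1, Real.sqrt_eq_rpow, Complex.ofReal_cpow (by positivity)]
      norm_num
    have hs0 : Real.sqrt (2 * π * v) ≠ 0 := by positivity
    have hF : Integrable (fun y : ℝ => Complex.exp (Complex.I * t * y) * (gaussianPDFReal m v y : ℂ)) := by
      have := (integrable_cexp_quadratic' hb c d).const_mul
        (((Real.sqrt (2 * π * v))⁻¹ : ℝ) : ℂ)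
      refine this.congr ?_
      filter_upwards with y
      rw [hpt y]
    have hcomplex : ∫ y : ℝ, Complex.exp (Complex.I * t * y) * (gaussianPDFReal m v y : ℂ)
        = Complex.exp (Complex.I * t * m - (v : ℝ) * t ^ 2 / 2) := by
      calc ∫ y : ℝ, Complex.exp (Complex.I * t * y) * (gaussianPDFReal m v y : ℂ)
          = ∫ y : ℝ, (((Real.sqrt (2 * π * v))⁻¹ : ℝ) : ℂ) * Complex.exp (b * y ^ 2 + c * y + d) := by
            simp_rw [hpt]
        _ = (((Real.sqrt (2 * π * v))⁻¹ : ℝ) : ℂ) * ∫ y : ℝ, Complex.exp (b * y ^ 2 + c * y + d) :=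
            integral_const_mul _ _
        _ = Complex.exp (Complex.I * t * m - (v : ℝ) * t ^ 2 / 2) := by
            rw [hint, hexp, hsqrt, ← mul_assoc]
            rw [← Complex.ofReal_mul]
            rw [inv_mul_cancel₀ hs0]
            simp
    have hre : ∀ y : ℝ, gaussianPDFReal m v y * Real.cos (y * t)
        = (Complex.exp (Complex.I * t * y) * (gaussianPDFReal m v y : ℂ)).re := by
      intro y
      simp [Complex.mul_re, Complex.exp_re, Complex.exp_im, Complex.mul_im, mul_comm]
    have hleft : ∫ y, Real.cos (y * t) ∂(gaussianReal m v)
        = ∫ y : ℝ, gaussianPDFReal m v y * Real.cos (y * t) := by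
      rw [gaussianReal_of_var_ne_zero _ hv]
      have hpdf : gaussianPDF m v
          = fun x => ((Real.toNNReal (gaussianPDFReal m v x) : ℝ≥0) : ℝ≥0∞) := rfl
      rw [hpdf, integral_withDensity_eq_integral_smul
        ((measurable_gaussianPDFReal m v).real_toNNReal)]
      congr 1
      funext y
      rw [NNReal.smul_def, Real.coe_toNNReal _ (gaussianPDFReal_nonneg m v y), smul_eq_mul]
    rw [hleft]
    calc ∫ y : ℝ, gaussianPDFReal m v y * Real.cos (y * t)
        = ∫ y : ℝ, (Complex.exp (Complex.I * t * y) * (gaussianPDFReal m v y : ℂ)).re := by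
          simp_rw [hre]
      _ = (∫ y : ℝ, Complex.exp (Complex.I * t * y) * (gaussianPDFReal m v y : ℂ)).re :=
          integral_re hF
      _ = Real.exp (-((v : ℝ) * t ^ 2) / 2) * Real.cos (m * t) := by
          rw [hcomplex]
          simp [Complex.exp_re, Complex.mul_im, mul_comm, neg_div, ← Complex.ofReal_pow]

lemma map_eval_pi' {ι : Type*} [Fintype ι] [DecidableEq ι] {α : ι → Type*}
    [∀ i, MeasurableSpace (α i)] (μ : ∀ i, Measure (α i))
    [∀ i, IsProbabilityMeasure (μ i)] (i : ι) :
    (Measure.pi μ).map (Function.eval i) = μ i := by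
  ext s hs
  rw [Measure.map_apply (measurable_pi_apply i) hs]
  have hpre : Function.eval i ⁻¹' s
      = Set.pi Set.univ (Function.update (fun _ => Set.univ) i s) := by
    ext f
    simp only [Set.mem_preimage, Set.mem_pi, Set.mem_univ, true_implies]
    constructor
    · intro h j
      by_cases hj : j = i
      · subst hj; simpa using h
      · simp [Function.update_of_ne hj]
    · intro h
      simpa using h i
  rw [hpre, Measure.pi_pi]
  rw [Finset.prod_eq_single i (fun j _ hj => by simp [Function.update_of_ne hj])
    (by simp)]
  simp

/-- If the frequencies `ω_{q,d}` are drawn independently with `ω_{q,d} ~ N(μ_q, σ_q²)`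
(so their joint law is the product of these Gaussian measures), then the expected inner
product of the spectral features is the spectral-mixture kernel
`Σ_q w_q exp(−σ_q² τ² / 2) cos(μ_q τ)` with `τ = x − x'`; in particular it is stationary. -/
theorem expected_spectral_kernel_is_spectral_mixture
    (Q D0 : ℕ) (hQ : 1 ≤ Q) (hD0 : 1 ≤ D0)
    (w φ μ σ : Fin Q → ℝ) (hw : ∀ q, 0 ≤ w q) (hσ : ∀ q, 0 ≤ σ q)
    (x x' : ℝ) :
    ∫ ωs : Fin Q × Fin D0 → ℝ,
        (∑ idx : Fin Q × Fin D0 × Fin 2,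
          phiS Q D0 w φ (fun q d => ωs (q, d)) x idx *
            phiS Q D0 w φ (fun q d => ωs (q, d)) x' idx)
      ∂(Measure.pi fun qd : Fin Q × Fin D0 =>
          gaussianReal (μ qd.1) ⟨(σ qd.1) ^ 2, sq_nonneg _⟩) =
    ∑ q : Fin Q,
      w q * Real.exp (-((σ q) ^ 2 * (x - x') ^ 2) / 2) * Real.cos (μ q * (x - x')) := by
  set τ : ℝ := x - x' with hτ
  set ν : Fin Q × Fin D0 → Measure ℝ :=
    fun qd => gaussianReal (μ qd.1) ⟨(σ qd.1) ^ 2, sq_nonneg _⟩ with hν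
  haveI : ∀ i, IsProbabilityMeasure (ν i) := fun i =>
    instIsProbabilityMeasureGaussianReal _ _
  have key : ∀ (c a b : ℝ), 0 ≤ c →
      Real.sqrt c * Real.cos a * (Real.sqrt c * Real.cos b)
        + Real.sqrt c * Real.sin a * (Real.sqrt c * Real.sin b)
      = c * Real.cos (a - b) := by
    intro c a b hc
    have h2 : Real.sqrt c * Real.sqrt c = c := Real.mul_self_sqrt hc
    rw [Real.cos_sub]
    linear_combination (Real.cos a * Real.cos b + Real.sin a * Real.sin b) * h2
  have hpt : ∀ ωs : Fin Q × Fin D0 → ℝ,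
      (∑ idx : Fin Q × Fin D0 × Fin 2,
        phiS Q D0 w φ (fun q d => ωs (q, d)) x idx *
          phiS Q D0 w φ (fun q d => ωs (q, d)) x' idx)
      = ∑ qd : Fin Q × Fin D0, (w qd.1 / D0) * Real.cos (ωs qd * τ) := by
    intro ωs
    rw [Fintype.sum_prod_type, Fintype.sum_prod_type]
    refine Finset.sum_congr rfl fun q _ => ?_
    rw [Fintype.sum_prod_type]
    refine Finset.sum_congr rfl fun d _ => ?_
    rw [Fin.sum_univ_two]
    simp only [phiS, if_pos rfl, if_true, if_neg (show ((1 : Fin 2) : Fin 2) ≠ 0 by decide)]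
    rw [key _ _ _ (div_nonneg (hw q) (Nat.cast_nonneg _))]
    congr 1
    rw [hτ]; ring
  simp_rw [hpt]
  have hmeas : ∀ qd : Fin Q × Fin D0,
      Measurable (fun ωs : Fin Q × Fin D0 → ℝ => Real.cos (ωs qd * τ)) :=
    fun qd => by fun_prop
  have hintg : ∀ qd : Fin Q × Fin D0,
      Integrable (fun ωs : Fin Q × Fin D0 → ℝ => w qd.1 / D0 * Real.cos (ωs qd * τ))
        (Measure.pi ν) := by
    intro qd
    refine Integrable.const_mul ?_ _
    refine (integrable_const (1 : ℝ)).mono' (hmeas qd).aestronglyMeasurable ?_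
    filter_upwards with ωs
    rw [Real.norm_eq_abs]
    exact Real.abs_cos_le_one _
  rw [integral_finset_sum _ (fun qd _ => hintg qd)]
  have hone : ∀ qd : Fin Q × Fin D0,
      ∫ ωs : Fin Q × Fin D0 → ℝ, Real.cos (ωs qd * τ) ∂(Measure.pi ν)
      = Real.exp (-((σ qd.1) ^ 2 * τ ^ 2) / 2) * Real.cos (μ qd.1 * τ) := by
    intro qd
    have : ∫ ωs : Fin Q × Fin D0 → ℝ, Real.cos (ωs qd * τ) ∂(Measure.pi ν)
        = ∫ y, Real.cos (y * τ) ∂(ν qd) := by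
      rw [← map_eval_pi' ν qd,
        integral_map (measurable_pi_apply qd).aemeasurable
          (Real.continuous_cos.comp (continuous_id.mul continuous_const)).aestronglyMeasurable]
    rw [this]
    have := integral_cos_gaussianReal (μ qd.1) ⟨(σ qd.1) ^ 2, sq_nonneg _⟩ τ
    rw [hν]
    exact this
  calc ∑ qd : Fin Q × Fin D0,
        ∫ ωs : Fin Q × Fin D0 → ℝ, w qd.1 / D0 * Real.cos (ωs qd * τ) ∂(Measure.pi ν)
      = ∑ qd : Fin Q × Fin D0,
        w qd.1 / D0 * (Real.exp (-((σ qd.1) ^ 2 * τ ^ 2) / 2) * Real.cos (μ qd.1 * τ)) := by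
        refine Finset.sum_congr rfl fun qd _ => ?_
        rw [integral_const_mul, hone qd]
    _ = ∑ q : Fin Q, w q * Real.exp (-((σ q) ^ 2 * τ ^ 2) / 2) * Real.cos (μ q * τ) := by
        rw [Fintype.sum_prod_type]
        refine Finset.sum_congr rfl fun q _ => ?_
        dsimp only
        rw [Finset.sum_const, Finset.card_univ, Fintype.card_fin, nsmul_eq_mul]
        have hD : (D0 : ℝ) ≠ 0 := Nat.cast_ne_zero.mpr (by omega)
        field_simp
end

section
/- The spectral-mixture kernel is positive semidefinite: let Q ≥ 1, w_q ≥ 0, μ_q ∈ ℝ and σ_q ≥ 0 for q = 1,…,Q, and define k : ℝ → ℝ by k(τ) = Σ_{q=1}^{Q} w_q·exp(−σ_q²τ²/2)·cos(μ_q·τ). Then for every n ≥ 1, all points x₁,…,x_n ∈ ℝ and all coefficients c₁,…,c_n ∈ ℝ, it holds that Σ_{i=1}^{n} Σ_{j=1}^{n} c_i·c_j·k(x_i − x_j) ≥ 0. -/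
open Real Nat

lemma real_exp_eq_tsum (y : ℝ) : Real.exp y = ∑' k : ℕ, y ^ k / k ! := by
  rw [Real.exp_eq_exp_ℝ, NormedSpace.exp_eq_tsum_div]

/-- A single Gaussian × cosine component is positive semidefinite. -/
lemma gauss_cos_psd (a m : ℝ) (ha : 0 ≤ a) (n : ℕ) (x c : Fin n → ℝ) :
    0 ≤ ∑ i : Fin n, ∑ j : Fin n, c i * c j *
        (Real.exp (-(a * (x i - x j) ^ 2) / 2) * Real.cos (m * (x i - x j))) := by
  set d : Fin n → ℝ := fun i => c i * Real.exp (-(a * x i ^ 2) / 2) with hd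
  have key : ∀ i j : Fin n, c i * c j *
      (Real.exp (-(a * (x i - x j) ^ 2) / 2) * Real.cos (m * (x i - x j))) =
      ∑' k : ℕ, (a ^ k / k !) *
        ((d i * Real.cos (m * x i) * x i ^ k) * (d j * Real.cos (m * x j) * x j ^ k) +
         (d i * Real.sin (m * x i) * x i ^ k) * (d j * Real.sin (m * x j) * x j ^ k)) := by
    intro i j
    have hexp : Real.exp (-(a * (x i - x j) ^ 2) / 2) =
        Real.exp (-(a * x i ^ 2) / 2) * Real.exp (-(a * x j ^ 2) / 2) *
          Real.exp (a * (x i * x j)) := by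
      rw [← Real.exp_add, ← Real.exp_add]; ring_nf
    have hcos : Real.cos (m * (x i - x j)) =
        Real.cos (m * x i) * Real.cos (m * x j) + Real.sin (m * x i) * Real.sin (m * x j) := by
      rw [mul_sub, Real.cos_sub]
    have hser : Real.exp (a * (x i * x j)) = ∑' k : ℕ, (a ^ k / k !) * (x i ^ k * x j ^ k) := by
      rw [real_exp_eq_tsum (a * (x i * x j))]
      congr 1; funext k; rw [mul_pow, mul_pow]; ring
    calc c i * c j * (Real.exp (-(a * (x i - x j) ^ 2) / 2) * Real.cos (m * (x i - x j)))
        = (c i * c j * Real.exp (-(a * x i ^ 2) / 2) * Real.exp (-(a * x j ^ 2) / 2) *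
            (Real.cos (m * x i) * Real.cos (m * x j) + Real.sin (m * x i) * Real.sin (m * x j))) *
            Real.exp (a * (x i * x j)) := by rw [hexp, hcos]; ring
      _ = _ := by
            rw [hser, ← tsum_mul_left]
            congr 1; funext k; simp only [hd]; ring
  have hsum : ∀ (f : Fin n → ℝ) (i j : Fin n), Summable (fun k : ℕ =>
      (a ^ k / k !) * ((f i * x i ^ k) * (f j * x j ^ k))) := by
    intro f i j
    have := (Real.summable_pow_div_factorial (a * (x i * x j))).mul_left (f i * f j)
    refine this.congr fun k => ?_
    rw [mul_pow, mul_pow]; ring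
  have h1 : ∀ i j : Fin n, Summable (fun k : ℕ => (a ^ k / k !) *
      ((d i * Real.cos (m * x i) * x i ^ k) * (d j * Real.cos (m * x j) * x j ^ k) +
       (d i * Real.sin (m * x i) * x i ^ k) * (d j * Real.sin (m * x j) * x j ^ k))) := by
    intro i j
    have := (hsum (fun i => d i * Real.cos (m * x i)) i j).add
      (hsum (fun i => d i * Real.sin (m * x i)) i j)
    refine this.congr fun k => by ring
  calc (0:ℝ) ≤ ∑' k : ℕ, (a ^ k / k !) *
        ((∑ i : Fin n, d i * Real.cos (m * x i) * x i ^ k) ^ 2 +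
         (∑ i : Fin n, d i * Real.sin (m * x i) * x i ^ k) ^ 2) := by
        refine tsum_nonneg fun k => mul_nonneg (div_nonneg (pow_nonneg ha k)
          (Nat.cast_nonneg _)) (by positivity)
    _ = ∑ i : Fin n, ∑ j : Fin n, c i * c j *
        (Real.exp (-(a * (x i - x j) ^ 2) / 2) * Real.cos (m * (x i - x j))) := by
        rw [show (∑ i : Fin n, ∑ j : Fin n, c i * c j *
            (Real.exp (-(a * (x i - x j) ^ 2) / 2) * Real.cos (m * (x i - x j)))) =
            ∑ i : Fin n, ∑ j : Fin n, ∑' k : ℕ, (a ^ k / k !) *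
              ((d i * Real.cos (m * x i) * x i ^ k) * (d j * Real.cos (m * x j) * x j ^ k) +
               (d i * Real.sin (m * x i) * x i ^ k) * (d j * Real.sin (m * x j) * x j ^ k))
          from Finset.sum_congr rfl fun i _ => Finset.sum_congr rfl fun j _ => key i j]
        rw [show (∑ i : Fin n, ∑ j : Fin n, ∑' k : ℕ, (a ^ k / k !) *
              ((d i * Real.cos (m * x i) * x i ^ k) * (d j * Real.cos (m * x j) * x j ^ k) +
               (d i * Real.sin (m * x i) * x i ^ k) * (d j * Real.sin (m * x j) * x j ^ k))) =
            ∑ i : Fin n, ∑' k : ℕ, ∑ j : Fin n, (a ^ k / k !) *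
              ((d i * Real.cos (m * x i) * x i ^ k) * (d j * Real.cos (m * x j) * x j ^ k) +
               (d i * Real.sin (m * x i) * x i ^ k) * (d j * Real.sin (m * x j) * x j ^ k))
          from Finset.sum_congr rfl fun i _ => (Summable.tsum_finsetSum fun j _ => h1 i j).symm]
        rw [← Summable.tsum_finsetSum (fun i _ => summable_sum fun j _ => h1 i j)]
        congr 1
        funext k
        rw [pow_two, pow_two, Finset.sum_mul_sum, Finset.sum_mul_sum,
          ← Finset.sum_add_distrib, Finset.mul_sum]
        refine Finset.sum_congr rfl fun i _ => ?_
        rw [← Finset.sum_add_distrib, Finset.mul_sum]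

/-- The spectral-mixture kernel `k(τ) = Σ_q w_q exp(−σ_q² τ² / 2) cos(μ_q τ)` is positive
semidefinite: all quadratic forms `Σ_i Σ_j c_i c_j k(x_i − x_j)` are nonnegative. -/
theorem spectral_mixture_kernel_posSemidef
    (Q : ℕ) (hQ : 1 ≤ Q) (w μ σ : Fin Q → ℝ) (hw : ∀ q, 0 ≤ w q) (hσ : ∀ q, 0 ≤ σ q)
    (n : ℕ) (hn : 1 ≤ n) (x c : Fin n → ℝ) :
    0 ≤ ∑ i : Fin n, ∑ j : Fin n, c i * c j *
        (∑ q : Fin Q,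
          w q * Real.exp (-((σ q) ^ 2 * (x i - x j) ^ 2) / 2) *
            Real.cos (μ q * (x i - x j))) := by
  have hswap : (∑ i : Fin n, ∑ j : Fin n, c i * c j *
        (∑ q : Fin Q, w q * Real.exp (-((σ q) ^ 2 * (x i - x j) ^ 2) / 2) *
            Real.cos (μ q * (x i - x j)))) =
      ∑ q : Fin Q, ∑ i : Fin n, ∑ j : Fin n, c i * c j *
        (w q * Real.exp (-((σ q) ^ 2 * (x i - x j) ^ 2) / 2) * Real.cos (μ q * (x i - x j))) := by
    simp only [Finset.mul_sum]
    rw [show (∑ i : Fin n, ∑ j : Fin n, ∑ q : Fin Q, c i * c j *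
        (w q * Real.exp (-((σ q) ^ 2 * (x i - x j) ^ 2) / 2) * Real.cos (μ q * (x i - x j)))) =
        ∑ i : Fin n, ∑ q : Fin Q, ∑ j : Fin n, c i * c j *
        (w q * Real.exp (-((σ q) ^ 2 * (x i - x j) ^ 2) / 2) * Real.cos (μ q * (x i - x j)))
      from Finset.sum_congr rfl fun i _ => Finset.sum_comm]
    exact Finset.sum_comm
  rw [hswap]
  refine Finset.sum_nonneg fun q _ => ?_
  have h0 := gauss_cos_psd ((σ q) ^ 2) (μ q) (sq_nonneg _) n x c
  have h2 : (∑ i : Fin n, ∑ j : Fin n, c i * c j *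
        (w q * Real.exp (-((σ q) ^ 2 * (x i - x j) ^ 2) / 2) * Real.cos (μ q * (x i - x j)))) =
      w q * ∑ i : Fin n, ∑ j : Fin n, c i * c j *
        (Real.exp (-((σ q) ^ 2 * (x i - x j) ^ 2) / 2) * Real.cos (μ q * (x i - x j))) := by
    rw [Finset.mul_sum]
    refine Finset.sum_congr rfl fun i _ => ?_
    rw [Finset.mul_sum]
    exact Finset.sum_congr rfl fun j _ => by ring
  rw [h2]
  exact mul_nonneg (hw q) h0
end

section
/- Random-sampling coverage bound: let a < b be reals with D = b − a, let p > 0 and let N ≥ 1 be an integer, and set J = ⌈4DN/p⌉. Let X₁,…,X_m be independent random variables, each uniformly distributed on [a, b], and let G_m be the maximum gap of {X₁,…,X_m} in [a, b] (including the boundary gaps X₍₁₎ − a and b − X₍ₘ₎). Then P(G_m > p/(2N)) ≤ J·exp(−m/J). -/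
open MeasureTheory ProbabilityTheory

/-- The maximum gap of a set of points `S` in the interval `[a, b]`: the largest `l` such that
some open subinterval of `[a, b]` of length `l` contains no point of `S`. For a finite set of
points `x₍₁₎ ≤ ⋯ ≤ x₍ₘ₎` in `[a, b]` this equals the largest of the consecutive differences
`x₍ᵢ₊₁₎ − x₍ᵢ₎` together with the boundary gaps `x₍₁₎ − a` and `b − x₍ₘ₎`. -/
noncomputable def maxGap (a b : ℝ) (S : Set ℝ) : ℝ :=
  sSup {l : ℝ | ∃ c, a ≤ c ∧ c + l ≤ b ∧ ∀ x ∈ S, x ∉ Set.Ioo c (c + l)}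

/-- If the max gap exceeds `t ≥ 2(b-a)/J`, then one of the `J` grid cells of width
`(b-a)/J` contains no point of `S`. -/
lemma maxGap_exists_empty_cell (a b : ℝ) (hab : a < b) (t : ℝ) (J : ℕ) (hJ : 0 < J)
    (hδ : 2 * ((b - a) / J) ≤ t) (S : Set ℝ) (h : t < maxGap a b S) :
    ∃ k < J, ∀ x ∈ S,
      x ∉ Set.Ioo (a + k * ((b - a) / J)) (a + (k + 1) * ((b - a) / J)) := by
  set δ : ℝ := (b - a) / J with hδdef
  have hJ' : (0 : ℝ) < J := by exact_mod_cast hJ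
  have hδpos : 0 < δ := div_pos (by linarith) hJ'
  have hJδ : (J : ℝ) * δ = b - a := by rw [hδdef]; field_simp [hJ'.ne']
  have hne : {l : ℝ | ∃ c, a ≤ c ∧ c + l ≤ b ∧ ∀ x ∈ S, x ∉ Set.Ioo c (c + l)}.Nonempty := by
    refine ⟨0, a, le_refl a, by linarith, ?_⟩
    intro x hx
    simp
  obtain ⟨l, ⟨c, hc, hcl, hno⟩, hlt⟩ := exists_lt_of_lt_csSup hne h
  set k : ℕ := ⌈(c - a) / δ⌉₊ with hk
  have hca : 0 ≤ (c - a) / δ := div_nonneg (by linarith) hδpos.le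
  have h1 : (c - a) / δ ≤ k := Nat.le_ceil _
  have h2 : (k : ℝ) < (c - a) / δ + 1 := Nat.ceil_lt_add_one hca
  have hcg : c ≤ a + k * δ := by
    have := (div_le_iff₀ hδpos).mp h1
    linarith
  have h3 : (k : ℝ) * δ < c - a + δ := by
    have := mul_lt_mul_of_pos_right h2 hδpos
    rw [add_mul, div_mul_cancel₀ _ hδpos.ne'] at this
    linarith
  have hgl : a + (k + 1) * δ < c + l := by nlinarith
  have hkJ : k < J := by
    have hlt2 : ((k : ℝ) + 1) * δ < (J : ℝ) * δ := by nlinarith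
    have h4 : ((k : ℝ) + 1) < J := (mul_lt_mul_iff_of_pos_right hδpos).mp hlt2
    exact_mod_cast (by linarith : (k : ℝ) < J)
  refine ⟨k, hkJ, fun x hx hmem => hno x hx ?_⟩
  exact ⟨lt_of_le_of_lt hcg hmem.1, lt_trans hmem.2 hgl⟩

/-- The probability that all of the i.i.d. uniform samples avoid a fixed grid cell of
width `(b-a)/J` is at most `exp(-m/J)`. -/
lemma cell_empty_prob
    (a b : ℝ) (hab : a < b) (J : ℕ) (hJ : 0 < J)
    (m : ℕ) (Ω : Type*) [MeasurableSpace Ω] (P : Measure Ω) [IsProbabilityMeasure P]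
    (X : Fin m → Ω → ℝ) (hmeas : ∀ i, Measurable (X i))
    (hindep : iIndepFun X P)
    (hunif : ∀ i, Measure.map (X i) P =
      (ENNReal.ofReal (b - a))⁻¹ • volume.restrict (Set.Icc a b))
    (k : ℕ) (hk : k < J) :
    P (⋂ i, X i ⁻¹' (Set.Ioo (a + k * ((b - a) / J)) (a + (k + 1) * ((b - a) / J)))ᶜ)
      ≤ ENNReal.ofReal (Real.exp (-(m : ℝ) / J)) := by
  set δ : ℝ := (b - a) / J with hδdef
  have hJ' : (0 : ℝ) < J := by exact_mod_cast hJ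
  have hD : (0 : ℝ) < b - a := by linarith
  have hδpos : 0 < δ := div_pos hD hJ'
  set C : Set ℝ := Set.Ioo (a + k * δ) (a + (k + 1) * δ) with hC
  have hCsub : C ⊆ Set.Icc a b := by
    intro x hx
    have hkJ : (k : ℝ) + 1 ≤ J := by exact_mod_cast hk
    have h1 : ((k : ℝ) + 1) * δ ≤ (J : ℝ) * δ := by nlinarith
    have hJδ : (J : ℝ) * δ = b - a := by rw [hδdef]; field_simp [hJ'.ne']
    constructor
    · have : 0 ≤ (k : ℝ) * δ := by positivity
      have := hx.1; linarith
    · have := hx.2; linarith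
  have hone : ∀ i, P (X i ⁻¹' Cᶜ) = ENNReal.ofReal (1 - 1 / J) := by
    intro i
    have hCmeas : MeasurableSet C := measurableSet_Ioo
    have hmapC : P (X i ⁻¹' C) = ENNReal.ofReal (1 / J) := by
      rw [← Measure.map_apply (hmeas i) hCmeas, hunif i]
      rw [Measure.smul_apply, smul_eq_mul, Measure.restrict_apply hCmeas,
        Set.inter_eq_left.mpr hCsub]
      rw [hC, Real.volume_Ioo]
      have hlen : a + (k + 1) * δ - (a + k * δ) = δ := by ring
      rw [hlen]
      have : δ = (b - a) * (1 / J) := by rw [hδdef]; ring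
      rw [this, ENNReal.ofReal_mul hD.le, ← mul_assoc,
        ENNReal.inv_mul_cancel (ne_of_gt (ENNReal.ofReal_pos.mpr hD)) ENNReal.ofReal_ne_top,
        one_mul]
    rw [Set.preimage_compl, measure_compl (hmeas i hCmeas) (measure_ne_top _ _),
      measure_univ, hmapC]
    rw [← ENNReal.ofReal_one, ← ENNReal.ofReal_sub _ (by positivity)]
  have hint := hindep.measure_inter_preimage_eq_mul Finset.univ
    (sets := fun _ => Cᶜ) (fun i _ => (measurableSet_Ioo (a := a + k * δ)).compl)
  have huniv : (⋂ i ∈ Finset.univ, X i ⁻¹' Cᶜ) = ⋂ i, X i ⁻¹' Cᶜ := by simp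
  rw [huniv] at hint
  rw [hint]
  have hfact : ∏ i ∈ Finset.univ, P (X i ⁻¹' Cᶜ) = ENNReal.ofReal ((1 - 1 / J) ^ m) := by
    simp_rw [hone]
    rw [Finset.prod_const, Finset.card_univ, Fintype.card_fin,
      ← ENNReal.ofReal_pow (by
        have : 1 / (J : ℝ) ≤ 1 := by
          rw [div_le_one hJ']; exact_mod_cast hJ
        linarith)]
  rw [hfact]
  apply ENNReal.ofReal_le_ofReal
  have h01 : 0 ≤ 1 - 1 / (J : ℝ) := by
    have : 1 / (J : ℝ) ≤ 1 := by rw [div_le_one hJ']; exact_mod_cast hJ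
    linarith
  have e1 : 1 - 1 / (J : ℝ) ≤ Real.exp (-(1 / J)) := by
    have := Real.add_one_le_exp (-(1 / (J : ℝ)))
    linarith
  calc (1 - 1 / (J : ℝ)) ^ m ≤ Real.exp (-(1 / J)) ^ m := pow_le_pow_left₀ h01 e1 m
    _ = Real.exp (-(m : ℝ) / J) := by
        rw [← Real.exp_nat_mul]
        congr 1
        field_simp

/-- Random-sampling coverage bound: let `X₁, …, X_m` be i.i.d. uniform on `[a, b]`,
`D = b − a`, `p > 0`, `N ≥ 1`, and `J = ⌈4DN/p⌉`. Then the maximum gap `G_m` of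
`{X₁, …, X_m}` in `[a, b]` (including boundary gaps) satisfies
`P(G_m > p/(2N)) ≤ J · exp(−m/J)`. -/
theorem random_sampling_gap_bound
    (a b : ℝ) (hab : a < b) (p : ℝ) (hp : 0 < p) (N : ℕ) (hN : 1 ≤ N)
    (m : ℕ) (hm : 1 ≤ m)
    (Ω : Type*) [MeasurableSpace Ω] (P : Measure Ω) [IsProbabilityMeasure P]
    (X : Fin m → Ω → ℝ) (hmeas : ∀ i, Measurable (X i))
    (hindep : iIndepFun X P)
    (hunif : ∀ i, Measure.map (X i) P =
      (ENNReal.ofReal (b - a))⁻¹ • volume.restrict (Set.Icc a b)) :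
    P {ω | p / (2 * (N : ℝ)) < maxGap a b (Set.range fun i => X i ω)} ≤
      ENNReal.ofReal
        ((⌈4 * (b - a) * (N : ℝ) / p⌉₊ : ℝ) *
          Real.exp (-(m : ℝ) / (⌈4 * (b - a) * (N : ℝ) / p⌉₊ : ℝ))) := by
  set J : ℕ := ⌈4 * (b - a) * (N : ℝ) / p⌉₊ with hJdef
  have hD : (0 : ℝ) < b - a := by linarith
  have hN' : (0 : ℝ) < N := by exact_mod_cast hN
  have hJpos : 0 < J := Nat.ceil_pos.mpr (by positivity)
  have hJ' : (0 : ℝ) < J := by exact_mod_cast hJpos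
  have hJge : 4 * (b - a) * N / p ≤ J := Nat.le_ceil _
  have hkey : 4 * (b - a) * N ≤ p * J := by
    rw [div_le_iff₀ hp] at hJge
    linarith
  have hδt : 2 * ((b - a) / J) ≤ p / (2 * N) := by
    rw [← mul_div_assoc, div_le_div_iff₀ hJ' (by positivity)]
    nlinarith
  have hsub : {ω | p / (2 * (N : ℝ)) < maxGap a b (Set.range fun i => X i ω)} ⊆
      ⋃ k ∈ Finset.range J, ⋂ i, X i ⁻¹'
        (Set.Ioo (a + k * ((b - a) / J)) (a + (k + 1) * ((b - a) / J)))ᶜ := by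
    intro ω hω
    obtain ⟨k, hk, hcell⟩ := maxGap_exists_empty_cell a b hab _ J hJpos hδt _ hω
    refine Set.mem_biUnion (Finset.mem_range.mpr hk) ?_
    simp only [Set.mem_iInter, Set.mem_preimage, Set.mem_compl_iff]
    intro i
    exact hcell (X i ω) ⟨i, rfl⟩
  calc P {ω | p / (2 * (N : ℝ)) < maxGap a b (Set.range fun i => X i ω)}
      ≤ P (⋃ k ∈ Finset.range J, ⋂ i, X i ⁻¹'
            (Set.Ioo (a + k * ((b - a) / J)) (a + (k + 1) * ((b - a) / J)))ᶜ) :=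
        measure_mono hsub
    _ ≤ ∑ k ∈ Finset.range J, P (⋂ i, X i ⁻¹'
            (Set.Ioo (a + k * ((b - a) / J)) (a + (k + 1) * ((b - a) / J)))ᶜ) :=
        measure_biUnion_finset_le _ _
    _ ≤ ∑ _k ∈ Finset.range J, ENNReal.ofReal (Real.exp (-(m : ℝ) / J)) :=
        Finset.sum_le_sum fun k hk =>
          cell_empty_prob a b hab J hJpos m Ω P X hmeas hindep hunif k
            (Finset.mem_range.mp hk)
    _ = (J : ENNReal) * ENNReal.ofReal (Real.exp (-(m : ℝ) / J)) := by
        rw [Finset.sum_const, Finset.card_range, nsmul_eq_mul]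
    _ = ENNReal.ofReal ((J : ℝ) * Real.exp (-(m : ℝ) / J)) := by
        rw [ENNReal.ofReal_mul (by positivity), ENNReal.ofReal_natCast]
end
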